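/- Let k be a field, V a k-vector space with dual V∨, and let (M_i V)_{i∈ℤ} and (M'_j V∨)_{j∈ℤ} be increasing ℤ-indexed filtrations of V and V∨ by subspaces. Suppose there exists j₀ ∈ ℤ such that M'_{j₀} V∨ = V∨ and M'_{j₀−1} V∨ ≠ V∨. Then for every i₀ ∈ ℤ one has M_{i₀} V = ⋂_f (id ⊗ f)(M_{i₀+j₀}(V ⊗ V∨)), where f ranges over all nonzero k-linear functionals f : V∨ → k. -/

import Mathlib

open TensorProduct

/-- The recovery formula for an increasing filtration `M` of `V` from the convolution
filtration on `V ⊗ V∨`: if `j₀` is the minimal index where the filtration `M'` of the dual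
reaches `V∨`, then `M i₀` is the intersection, over all nonzero functionals `f` on `V∨`, of
the images of `M_{i₀+j₀}(V ⊗ V∨)` under `id ⊗ f`. -/
theorem recovery_formula (k : Type*) [Field k] (V : Type*) [AddCommGroup V] [Module k V]
    (M : ℤ → Submodule k V) (M' : ℤ → Submodule k (Module.Dual k V))
    (hM : Monotone M) (hM' : Monotone M')
    (j₀ : ℤ) (hj₀ : M' j₀ = ⊤) (hj₀' : M' (j₀ - 1) ≠ ⊤) (i₀ : ℤ) :
    M i₀ =
      ⨅ (f : Module.Dual k V →ₗ[k] k) (_ : f ≠ 0),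
        Submodule.map
          ((TensorProduct.rid k V).toLinearMap ∘ₗ
            TensorProduct.map (LinearMap.id : V →ₗ[k] V) f)
          (⨆ (i : ℤ) (j : ℤ) (_ : i + j = i₀ + j₀),
            LinearMap.range (TensorProduct.map (M i).subtype (M' j).subtype)) := by
  apply le_antisymm
  · -- `M i₀` is contained in every image
    refine le_iInf fun f => le_iInf fun hf => ?_
    intro v hv
    -- find φ with f φ = 1
    obtain ⟨ψ, hψ⟩ : ∃ ψ, f ψ ≠ 0 := by
      by_contra h
      push_neg at h
      exact hf (LinearMap.ext fun ψ => h ψ)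
    set φ : Module.Dual k V := (f ψ)⁻¹ • ψ with hφdef
    have hfφ : f φ = 1 := by
      simp [hφdef, inv_mul_cancel₀ hψ]
    have hφmem : φ ∈ M' j₀ := by rw [hj₀]; trivial
    refine ⟨v ⊗ₜ[k] φ, ?_, ?_⟩
    · apply Submodule.mem_iSup_of_mem i₀
      apply Submodule.mem_iSup_of_mem j₀
      apply Submodule.mem_iSup_of_mem rfl
      exact ⟨(⟨v, hv⟩ : M i₀) ⊗ₜ[k] (⟨φ, hφmem⟩ : M' j₀), rfl⟩
    · simp [hfφ]
  · -- the intersection is contained in `M i₀`: use a functional vanishing on `M' (j₀ - 1)`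
    -- construct such a nonzero functional
    obtain ⟨x, hx⟩ : ∃ x : Module.Dual k V, x ∉ M' (j₀ - 1) := by
      by_contra h
      push_neg at h
      exact hj₀' (Submodule.eq_top_iff'.mpr h)
    have hxq : Submodule.Quotient.mk (p := M' (j₀ - 1)) x ≠ 0 := by
      rwa [Ne, Submodule.Quotient.mk_eq_zero]
    obtain ⟨g, hg⟩ : ∃ g : Module.Dual k (Module.Dual k V ⧸ M' (j₀ - 1)),
        g (Submodule.Quotient.mk x) ≠ 0 := by
      by_contra h
      push_neg at h
      exact hxq ((Module.forall_dual_apply_eq_zero_iff k _).mp h)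
    set f₀ : Module.Dual k V →ₗ[k] k := g ∘ₗ (M' (j₀ - 1)).mkQ with hf₀def
    have hf₀ : f₀ ≠ 0 := by
      intro h
      apply hg
      have := congrArg (fun u => u x) (congrArg DFunLike.coe h)
      simpa [hf₀def] using this
    have hvanish : ∀ φ ∈ M' (j₀ - 1), f₀ φ = 0 := by
      intro φ hφ
      simp [hf₀def, (Submodule.Quotient.mk_eq_zero _).mpr hφ]
    refine le_trans (iInf_le_of_le f₀ (iInf_le _ hf₀)) ?_
    rw [Submodule.map_le_iff_le_comap]
    refine iSup_le fun i => iSup_le fun j => iSup_le fun hij => ?_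
    rw [TensorProduct.range_map_eq_span_tmul, Submodule.span_le]
    rintro _ ⟨m, n, rfl⟩
    simp only [Submodule.coe_subtype, SetLike.mem_coe, Submodule.mem_comap,
      LinearMap.coe_comp, Function.comp_apply, LinearEquiv.coe_coe,
      TensorProduct.map_tmul, LinearMap.id_coe, id_eq, TensorProduct.rid_tmul]
    by_cases hj : j ≤ j₀ - 1
    · rw [hvanish (n : Module.Dual k V) (hM' hj n.2), zero_smul]
      exact Submodule.zero_mem _
    · have hi : i ≤ i₀ := by omega
      exact Submodule.smul_mem _ _ (hM hi m.2)
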